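/- arXiv:2311.02045 — 18 statements merged into one kernel-verified Lean document; each statement's English description precedes it below -/
import Mathlib

section
/- Let P be a behavior in the CHSH Bell scenario admitting a local-hidden-variable model. If P(0,0|0,0) = 0, P(1,1|0,1) = 0, and P(1,1|1,0) = 0, then P(1,1|1,1) = 0. (Hardy's paradox: the zero-probability constraints force the success probability to vanish in any LHV model.) -/
/-- CHSH Bell scenario: `P a b x y` is the probability of outcomes `(a, b)`
given inputs `(x, y)`, with an LHV model given by a finite hidden-variable
type `Λ`, weights `w`, and deterministic response functions `f` (Alice)
and `g` (Bob). -/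
theorem stmt_0
    (P : Fin 2 → Fin 2 → Fin 2 → Fin 2 → ℝ)
    (hPpos : ∀ a b x y, 0 ≤ P a b x y)
    (hPnorm : ∀ x y, ∑ a, ∑ b, P a b x y = 1)
    (Λ : Type) [Fintype Λ]
    (w : Λ → ℝ) (f g : Λ → Fin 2 → Fin 2)
    (hw : ∀ l, 0 ≤ w l) (hw1 : ∑ l, w l = 1)
    (hP : ∀ a b x y, P a b x y =
      ∑ l, w l * (if f l x = a then (1 : ℝ) else 0) * (if g l y = b then (1 : ℝ) else 0))
    (h1 : P 0 0 0 0 = 0) (h2 : P 1 1 0 1 = 0) (h3 : P 1 1 1 0 = 0) :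
    P 1 1 1 1 = 0 := by
  have key : ∀ (a b x y : Fin 2), P a b x y = 0 →
      ∀ l : Λ, w l * (if f l x = a then (1:ℝ) else 0) * (if g l y = b then (1:ℝ) else 0) = 0 := by
    intro a b x y h l
    have := (Finset.sum_eq_zero_iff_of_nonneg (fun i _ => mul_nonneg (mul_nonneg (hw i) (by split <;> norm_num)) (by split <;> norm_num))).mp
      ((hP a b x y ▸ h)) l (Finset.mem_univ l)
    exact this
  rw [hP]
  apply Finset.sum_eq_zero
  intro l _
  rcases eq_or_lt_of_le (hw l) with hwl | hwl
  · simp [← hwl]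
  by_cases hf : f l 1 = 1
  · by_cases hg : g l 1 = 1
    · -- derive g l 0 = 0 from h3
      have t3 := key 1 1 1 0 h3 l
      simp [hf, hwl.ne'] at t3
      have t2 := key 1 1 0 1 h2 l
      simp [hg, hwl.ne'] at t2
      have t1 := key 0 0 0 0 h1 l
      have hg0 : g l 0 = 0 := by omega
      have hf0 : f l 0 = 0 := by omega
      simp [hg0, hf0, hwl.ne'] at t1
    · simp [hg]
  · simp [hf]
end

section
/- Let P be a behavior in the CHSH Bell scenario admitting a local-hidden-variable model. If P(1,1|0,1) = 0 and P(1,1|1,0) = 0, then P(1,1|1,1) ≤ P(0,0|0,0). (Cabello–Liang–Li argument: the degree of success q − p = P(1,1|1,1) − P(0,0|0,0) is nonpositive for every LHV model.) -/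
/-- CHSH Bell scenario: `P a b x y` is the probability of outcomes `(a, b)`
given inputs `(x, y)`, with an LHV model given by a finite hidden-variable
type `Λ`, weights `w`, and deterministic response functions `f` (Alice)
and `g` (Bob). -/
theorem stmt_1
    (P : Fin 2 → Fin 2 → Fin 2 → Fin 2 → ℝ)
    (hPpos : ∀ a b x y, 0 ≤ P a b x y)
    (hPnorm : ∀ x y, ∑ a, ∑ b, P a b x y = 1)
    (Λ : Type) [Fintype Λ]
    (w : Λ → ℝ) (f g : Λ → Fin 2 → Fin 2)
    (hw : ∀ l, 0 ≤ w l) (hw1 : ∑ l, w l = 1)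
    (hP : ∀ a b x y, P a b x y =
      ∑ l, w l * (if f l x = a then (1 : ℝ) else 0) * (if g l y = b then (1 : ℝ) else 0))
    (h2 : P 1 1 0 1 = 0) (h3 : P 1 1 1 0 = 0) :
    P 1 1 1 1 ≤ P 0 0 0 0 := by
  rw [hP] at h2 h3 ⊢
  rw [hP]
  have key : ∀ (x y : Fin 2),
      (∑ l, w l * (if f l x = 1 then (1:ℝ) else 0) * (if g l y = 1 then (1:ℝ) else 0)) = 0 →
      ∀ l, w l * (if f l x = 1 then (1:ℝ) else 0) * (if g l y = 1 then (1:ℝ) else 0) = 0 := by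
    intro x y h l
    have := (Finset.sum_eq_zero_iff_of_nonneg (fun l _ => by
      have := hw l; positivity)).mp h l (Finset.mem_univ l)
    exact this
  apply Finset.sum_le_sum
  intro l _
  have h2l := key 0 1 h2 l
  have h3l := key 1 0 h3 l
  rcases eq_or_lt_of_le (hw l) with hwl | hwl
  · simp [← hwl]
  · by_cases hf : f l 1 = 1
    · by_cases hg : g l 1 = 1
      · -- from h2l: f l 0 ≠ 1, from h3l: g l 0 ≠ 1
        simp [hf, hg, hwl.ne'] at h2l h3l
        have hf0 : f l 0 = 0 := by omega
        have hg0 : g l 0 = 0 := by omega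
        simp [hf, hg, hf0, hg0]
      · simp [hg]
        positivity
    · simp [hf]
      positivity
end

section
/- Let P be a behavior in the CHSH Bell scenario admitting a local-hidden-variable model. If P(0,0|0,0) = 0 and P(1,1|1,0) = 0, then P(1,1|1,1) ≤ P(1,1|0,1). (Failure-of-transitivity-of-implications (FTI) argument: the degree of success q − r = P(1,1|1,1) − P(1,1|0,1) is nonpositive for every LHV model.) -/
/-- CHSH Bell scenario: `P a b x y` is the probability of outcomes `(a, b)`
given inputs `(x, y)`, with an LHV model given by a finite hidden-variable
type `Λ`, weights `w`, and deterministic response functions `f` (Alice)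
and `g` (Bob). -/
theorem stmt_2
    (P : Fin 2 → Fin 2 → Fin 2 → Fin 2 → ℝ)
    (hPpos : ∀ a b x y, 0 ≤ P a b x y)
    (hPnorm : ∀ x y, ∑ a, ∑ b, P a b x y = 1)
    (Λ : Type) [Fintype Λ]
    (w : Λ → ℝ) (f g : Λ → Fin 2 → Fin 2)
    (hw : ∀ l, 0 ≤ w l) (hw1 : ∑ l, w l = 1)
    (hP : ∀ a b x y, P a b x y =
      ∑ l, w l * (if f l x = a then (1 : ℝ) else 0) * (if g l y = b then (1 : ℝ) else 0))
    (h1 : P 0 0 0 0 = 0) (h3 : P 1 1 1 0 = 0) :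
    P 1 1 1 1 ≤ P 1 1 0 1 := by
  have key : ∀ (a b x y : Fin 2), P a b x y = 0 →
      ∀ l, w l = 0 ∨ f l x ≠ a ∨ g l y ≠ b := by
    intro a b x y h l
    rw [hP] at h
    have hz := (Finset.sum_eq_zero_iff_of_nonneg (fun l _ => by
      have := hw l; split_ifs <;> simp [this])).mp h l (Finset.mem_univ l)
    by_contra hc
    push_neg at hc
    obtain ⟨hw0, hfa, hgb⟩ := hc
    rw [hfa, hgb] at hz
    simp at hz
    exact hw0 hz
  rw [hP 1 1 1 1, hP 1 1 0 1]
  apply Finset.sum_le_sum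
  intro l _
  rcases key 0 0 0 0 h1 l with hw0 | hf | hg
  · simp [hw0]
  · have hf0 : f l 0 = 1 := by omega
    rw [hf0]
    by_cases h11 : f l 1 = 1 <;> simp [h11] <;> split_ifs <;> simp [hw l]
  · have hg0 : g l 0 = 1 := by omega
    rcases key 1 1 1 0 h3 l with hw0 | hf | hg'
    · simp [hw0]
    · have : f l 1 = 0 := by omega
      simp [this]
      split_ifs <;> simp [hw l]
    · exact absurd hg0 hg'
end

section
/- Every behavior P in the CHSH Bell scenario admitting a local-hidden-variable model satisfies the Clauser–Horne inequality P(1,1|1,1) − P(1,1|1,0) − P(1,1|0,1) − P(0,0|0,0) ≤ 0. -/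
/-- CHSH Bell scenario: `P a b x y` is the probability of outcomes `(a, b)`
given inputs `(x, y)`, with an LHV model given by a finite hidden-variable
type `Λ`, weights `w`, and deterministic response functions `f` (Alice)
and `g` (Bob). -/
theorem stmt_3
    (P : Fin 2 → Fin 2 → Fin 2 → Fin 2 → ℝ)
    (hPpos : ∀ a b x y, 0 ≤ P a b x y)
    (hPnorm : ∀ x y, ∑ a, ∑ b, P a b x y = 1)
    (Λ : Type) [Fintype Λ]
    (w : Λ → ℝ) (f g : Λ → Fin 2 → Fin 2)
    (hw : ∀ l, 0 ≤ w l) (hw1 : ∑ l, w l = 1)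
    (hP : ∀ a b x y, P a b x y =
      ∑ l, w l * (if f l x = a then (1 : ℝ) else 0) * (if g l y = b then (1 : ℝ) else 0))
     :
    P 1 1 1 1 - P 1 1 1 0 - P 1 1 0 1 - P 0 0 0 0 ≤ 0 := by
  simp only [hP, ← Finset.sum_sub_distrib]
  apply Finset.sum_nonpos
  intro l _
  have := hw l
  split_ifs <;> first | nlinarith | omega
end

section
/- Let ε ≥ 0 and let P be a behavior in the CHSH Bell scenario admitting a local-hidden-variable model. If P(0,0|0,0) ≤ ε and P(1,1|1,0) ≤ ε, then P(1,1|1,1) − P(1,1|0,1) ≤ 2ε. (Relaxed FTI argument: generalized degree of success q − r − 2ε is nonpositive for LHV models when the zero-probability constraints are satisfied only up to tolerance ε.) -/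
/-- CHSH Bell scenario: `P a b x y` is the probability of outcomes `(a, b)`
given inputs `(x, y)`, with an LHV model given by a finite hidden-variable
type `Λ`, weights `w`, and deterministic response functions `f` (Alice)
and `g` (Bob). -/
theorem stmt_4
    (P : Fin 2 → Fin 2 → Fin 2 → Fin 2 → ℝ)
    (hPpos : ∀ a b x y, 0 ≤ P a b x y)
    (hPnorm : ∀ x y, ∑ a, ∑ b, P a b x y = 1)
    (Λ : Type) [Fintype Λ]
    (w : Λ → ℝ) (f g : Λ → Fin 2 → Fin 2)
    (hw : ∀ l, 0 ≤ w l) (hw1 : ∑ l, w l = 1)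
    (hP : ∀ a b x y, P a b x y =
      ∑ l, w l * (if f l x = a then (1 : ℝ) else 0) * (if g l y = b then (1 : ℝ) else 0))
    (ε : ℝ) (hε : 0 ≤ ε) (h1 : P 0 0 0 0 ≤ ε) (h3 : P 1 1 1 0 ≤ ε) :
    P 1 1 1 1 - P 1 1 0 1 ≤ 2 * ε := by
  have key : P 1 1 1 1 - P 1 1 0 1 ≤ P 0 0 0 0 + P 1 1 1 0 := by
    simp only [hP, ← Finset.sum_add_distrib, ← Finset.sum_sub_distrib]
    apply Finset.sum_le_sum
    intro l _
    have hwl := hw l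
    rcases (show f l 0 = 0 ∨ f l 0 = 1 by omega) with h0 | h0 <;>
    rcases (show f l 1 = 0 ∨ f l 1 = 1 by omega) with h1' | h1' <;>
    rcases (show g l 0 = 0 ∨ g l 0 = 1 by omega) with h2 | h2 <;>
    rcases (show g l 1 = 0 ∨ g l 1 = 1 by omega) with h3' | h3' <;>
    simp [h0, h1', h2, h3'] <;> linarith
  linarith
end

section
/- Let ε ≥ 0 and let P be a behavior in the CHSH Bell scenario admitting a local-hidden-variable model. If P(1,1|0,1) ≤ ε and P(1,1|1,0) ≤ ε, then P(1,1|1,1) − P(0,0|0,0) ≤ 2ε. (Relaxed Cabello–Liang–Li argument: generalized degree of success q − p − 2ε is nonpositive for LHV models when the zero-probability constraints are satisfied only up to tolerance ε.) -/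
/-- CHSH Bell scenario: `P a b x y` is the probability of outcomes `(a, b)`
given inputs `(x, y)`, with an LHV model given by a finite hidden-variable
type `Λ`, weights `w`, and deterministic response functions `f` (Alice)
and `g` (Bob). -/
theorem stmt_5
    (P : Fin 2 → Fin 2 → Fin 2 → Fin 2 → ℝ)
    (hPpos : ∀ a b x y, 0 ≤ P a b x y)
    (hPnorm : ∀ x y, ∑ a, ∑ b, P a b x y = 1)
    (Λ : Type) [Fintype Λ]
    (w : Λ → ℝ) (f g : Λ → Fin 2 → Fin 2)
    (hw : ∀ l, 0 ≤ w l) (hw1 : ∑ l, w l = 1)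
    (hP : ∀ a b x y, P a b x y =
      ∑ l, w l * (if f l x = a then (1 : ℝ) else 0) * (if g l y = b then (1 : ℝ) else 0))
    (ε : ℝ) (hε : 0 ≤ ε) (h2 : P 1 1 0 1 ≤ ε) (h3 : P 1 1 1 0 ≤ ε) :
    P 1 1 1 1 - P 0 0 0 0 ≤ 2 * ε := by
  have key : P 1 1 1 1 - P 0 0 0 0 ≤ P 1 1 0 1 + P 1 1 1 0 := by
    rw [hP 1 1 1 1, hP 0 0 0 0, hP 1 1 0 1, hP 1 1 1 0, ← Finset.sum_sub_distrib,
      ← Finset.sum_add_distrib]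
    apply Finset.sum_le_sum
    intro l _
    have hwl := hw l
    have h0 : f l 0 = 0 ∨ f l 0 = 1 := by omega
    have h1 : f l 1 = 0 ∨ f l 1 = 1 := by omega
    have hg0 : g l 0 = 0 ∨ g l 0 = 1 := by omega
    have hg1 : g l 1 = 0 ∨ g l 1 = 1 := by omega
    rcases h0 with h0 | h0 <;> rcases h1 with h1 | h1 <;> rcases hg0 with hg0 | hg0 <;>
      rcases hg1 with hg1 | hg1 <;> simp [h0, h1, hg0, hg1] <;> linarith
  linarith
end

section
/- Let k ≥ 3 be odd, d ≥ 2, and let s^A, s^B : {0,1,…,k−1} → {0,1,…,d−1} be deterministic outcome assignments. Suppose that for every odd i with 1 ≤ i ≤ k−1 one has s^A_i ≤ s^B_{i−1} and s^A_{i−1} ≤ s^B_i, and for every even i with 1 ≤ i ≤ k−1 one has s^A_i ≥ s^B_{i−1} and s^A_{i−1} ≥ s^B_i. Then s^A_{k−1} < s^B_{k−1} implies s^A_0 < s^B_0. (Deterministic chain underlying the generalized Cabello–Liang–Li argument for odd k: the hypotheses force s^A_0 ≤ ⋯ ≤ s^B_{k−2} ≤ s^A_{k−1} < s^B_{k−1}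 ≤ s^A_{k−2} ≤ ⋯ ≤ s^B_0.) -/
/-- Deterministic chain underlying the generalized Cabello–Liang–Li argument, odd `k`:
`sA i` and `sB i` are the deterministic outcomes (in `{0,…,d−1}`) assigned to
input `i ∈ {0,…,k−1}` of Alice and Bob, respectively. -/
theorem stmt_6 (k d : ℕ) (hk : 3 ≤ k) (hkodd : Odd k) (hd : 2 ≤ d)
    (sA sB : ℕ → ℕ)
    (hsA : ∀ i, i < k → sA i < d) (hsB : ∀ i, i < k → sB i < d)
    (hodd : ∀ i, 1 ≤ i → i ≤ k - 1 → Odd i → sA i ≤ sB (i - 1) ∧ sA (i - 1) ≤ sB i)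
    (heven : ∀ i, 1 ≤ i → i ≤ k - 1 → Even i → sB (i - 1) ≤ sA i ∧ sB i ≤ sA (i - 1))
    (h : sA (k - 1) < sB (k - 1)) :
    sA 0 < sB 0 := by
  obtain ⟨t, ht⟩ := hkodd
  have key : ∀ m, 2 * m ≤ k - 1 → sA (2 * m) < sB (2 * m) → sA 0 < sB 0 := by
    intro m
    induction m with
    | zero => simpa using id
    | succ n ih =>
      intro hle hlt
      obtain ⟨ha1, ha2⟩ := hodd (2 * n + 1) (by omega) (by omega) ⟨n, by ring⟩
      obtain ⟨hb1, hb2⟩ := heven (2 * n + 2) (by omega) (by omega) ⟨n + 1, by ring⟩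
      have e1 : 2 * n + 1 - 1 = 2 * n := by omega
      have e2 : 2 * n + 2 - 1 = 2 * n + 1 := by omega
      rw [e1] at ha1 ha2
      rw [e2] at hb1 hb2
      have e3 : 2 * (n + 1) = 2 * n + 2 := by ring
      rw [e3] at hlt
      exact ih (by omega) (by omega)
  have hk1 : k - 1 = 2 * t := by omega
  exact key t (by omega) (by rw [← hk1]; exact h)
end

section
/- Let k ≥ 2 be even, d ≥ 2, and let s^A, s^B : {0,1,…,k−1} → {0,1,…,d−1} be deterministic outcome assignments. Suppose that for every odd i with 1 ≤ i ≤ k−1 one has s^A_i ≤ s^B_{i−1} and s^A_{i−1} ≤ s^B_i, and for every even i with 1 ≤ i ≤ k−1 one has s^A_i ≥ s^B_{i−1} and s^A_{i−1} ≥ s^B_i. Then s^A_{k−1} > s^B_{k−1} implies s^A_0 < s^B_0. (Deterministic chain underlying the generalized Cabello–Liang–Li argument for even k: the hypotheses force s^A_0 ≤ ⋯ ≤ s^A_{k−2} ≤ s^B_{k−1} < s^A_{k−1} ≤ s^B_{k−2} ≤ ⋯ ≤ s^B_0.) -/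
/-- Deterministic chain underlying the generalized Cabello–Liang–Li argument, even `k`:
`sA i` and `sB i` are the deterministic outcomes (in `{0,…,d−1}`) assigned to
input `i ∈ {0,…,k−1}` of Alice and Bob, respectively. -/
theorem stmt_7 (k d : ℕ) (hk : 2 ≤ k) (hkeven : Even k) (hd : 2 ≤ d)
    (sA sB : ℕ → ℕ)
    (hsA : ∀ i, i < k → sA i < d) (hsB : ∀ i, i < k → sB i < d)
    (hodd : ∀ i, 1 ≤ i → i ≤ k - 1 → Odd i → sA i ≤ sB (i - 1) ∧ sA (i - 1) ≤ sB i)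
    (heven : ∀ i, 1 ≤ i → i ≤ k - 1 → Even i → sB (i - 1) ≤ sA i ∧ sB i ≤ sA (i - 1))
    (h : sB (k - 1) < sA (k - 1)) :
    sA 0 < sB 0 := by
  have key : ∀ m, Odd m → m ≤ k - 1 → sB m < sA m → sA 0 < sB 0 := by
    intro m
    induction m using Nat.strong_induction_on with
    | _ m ih =>
      intro hm hmk hlt
      obtain ⟨j, hj⟩ := hm
      by_cases h1 : m = 1
      · subst h1
        obtain ⟨ha1, ha2⟩ := hodd 1 le_rfl hmk ⟨0, by ring⟩
        simp only [Nat.sub_self] at ha1 ha2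
        omega
      · have hm3 : 3 ≤ m := by omega
        obtain ⟨ha1, ha2⟩ := hodd m (by omega) hmk ⟨j, hj⟩
        obtain ⟨hb1, hb2⟩ := heven (m - 1) (by omega) (by omega) ⟨j, by omega⟩
        have e1 : m - 1 - 1 = m - 2 := by omega
        rw [e1] at hb1 hb2
        exact ih (m - 2) (by omega) ⟨j - 1, by omega⟩ (by omega) (by omega)
  obtain ⟨t, ht⟩ := hkeven
  exact key (k - 1) ⟨t - 1, by omega⟩ le_rfl h
end

section
/- Let k ≥ 2, d ≥ 2, and let P be a behavior in the bipartite k-input d-output Bell scenario admitting a local-hidden-variable model. Suppose P(A_i > B_{i−1}) = 0 and P(A_{i−1} > B_i) = 0 for every odd i ∈ {1,…,k−1}, and P(A_i < B_{i−1}) = 0 and P(A_{i−1} < B_i) = 0 for every even i ∈ {1,…,k−1}. Define q := P(A_{k−1} < B_{k−1}) if k is odd and q := P(A_{k−1} > B_{k−1}) if k is even, and p := P(A_0 < B_0). Then q ≤ p. (Generalized Cabello–Liang–Li argument: the degree of success q − p is nonpositive for every LHV model.) -/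
/-- `probLT d P x y` is `P(A_x < B_y)`, where `P a b x y` is the probability of
outcomes `(a, b)` given inputs `(x, y)` in a `k`-input `d`-output Bell scenario. -/
noncomputable def probLT (d : ℕ) (P : ℕ → ℕ → ℕ → ℕ → ℝ) (x y : ℕ) : ℝ :=
  ∑ a ∈ Finset.range d, ∑ b ∈ Finset.range d, if a < b then P a b x y else 0

/-- `probGT d P x y` is `P(A_x > B_y)`. -/
noncomputable def probGT (d : ℕ) (P : ℕ → ℕ → ℕ → ℕ → ℝ) (x y : ℕ) : ℝ :=
  ∑ a ∈ Finset.range d, ∑ b ∈ Finset.range d, if b < a then P a b x y else 0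

lemma collapse_aux (d u v : ℕ) (hu : u < d) (hv : v < d) (c : ℝ)
    (p : ℕ → ℕ → Prop) [∀ a b, Decidable (p a b)] :
    ∑ a ∈ Finset.range d, ∑ b ∈ Finset.range d,
      (if p a b then c * (if u = a then (1:ℝ) else 0) * (if v = b then (1:ℝ) else 0) else 0)
      = if p u v then c else 0 := by
  have h1 : ∀ a b, (if p a b then c * (if u = a then (1:ℝ) else 0) * (if v = b then (1:ℝ) else 0) else 0)
      = (if u = a then (1:ℝ) else 0) * (if v = b then (if p a b then c else 0) else 0) := by
    intro a b; split_ifs <;> ring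
  simp only [h1]
  rw [Finset.sum_congr rfl (fun a _ => by
    rw [← Finset.mul_sum, Finset.sum_ite_eq (Finset.range d) v
      (fun b => if p a b then c else 0)])]
  simp only [Finset.mem_range, hv, if_true]
  have h2 : ∀ a, (if u = a then (1:ℝ) else 0) * (if p a v then c else 0)
      = if u = a then (if p a v then c else 0) else 0 := by
    intro a; split_ifs <;> ring
  simp only [h2, Finset.sum_ite_eq (Finset.range d) u, Finset.mem_range, hu, if_true]

lemma prob_eq_aux (d : ℕ) {Λ : Type} [Fintype Λ] (w : Λ → ℝ) (u v : Λ → ℕ)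
    (hu : ∀ l, u l < d) (hv : ∀ l, v l < d)
    (p : ℕ → ℕ → Prop) [∀ a b, Decidable (p a b)] :
    ∑ a ∈ Finset.range d, ∑ b ∈ Finset.range d,
      (if p a b then ∑ l, w l * (if u l = a then (1:ℝ) else 0) * (if v l = b then (1:ℝ) else 0) else 0)
      = ∑ l, w l * (if p (u l) (v l) then (1:ℝ) else 0) := by
  have step : ∀ a b, (if p a b then ∑ l, w l * (if u l = a then (1:ℝ) else 0) * (if v l = b then (1:ℝ) else 0) else 0)
      = ∑ l, (if p a b then w l * (if u l = a then (1:ℝ) else 0) * (if v l = b then (1:ℝ) else 0) else 0) := by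
    intro a b; split_ifs <;> simp
  simp only [step]
  rw [Finset.sum_congr rfl (fun a _ => Finset.sum_comm), Finset.sum_comm]
  refine Finset.sum_congr rfl (fun l _ => ?_)
  rw [collapse_aux d (u l) (v l) (hu l) (hv l) (w l) p]
  split_ifs <;> ring

lemma chain_aux (k : ℕ) (a b : ℕ → ℕ)
    (hodd : ∀ i, 1 ≤ i → i ≤ k - 1 → Odd i → a i ≤ b (i-1) ∧ a (i-1) ≤ b i)
    (heven : ∀ i, 1 ≤ i → i ≤ k - 1 → Even i → b (i-1) ≤ a i ∧ b i ≤ a (i-1)) :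
    ∀ i, i ≤ k - 1 → ((a 0 : ℤ) - b 0) ≤ (if Even i then (a i : ℤ) - b i else (b i : ℤ) - a i) := by
  intro i
  induction i with
  | zero => intro _; simp
  | succ n ih =>
    intro hn
    have H := ih (by omega)
    by_cases he : Even (n+1)
    · have hno : ¬ Even n := by rw [Nat.even_add_one] at he; exact he
      have hc := heven (n+1) (by omega) hn he
      simp only [Nat.add_sub_cancel] at hc
      rw [if_pos he]; rw [if_neg hno] at H
      have h1 := hc.1; have h2 := hc.2; omega
    · have hno : Even n := by rw [Nat.even_add_one, not_not] at he; exact he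
      have hc := hodd (n+1) (by omega) hn (Nat.not_even_iff_odd.mp he)
      simp only [Nat.add_sub_cancel] at hc
      rw [if_neg he]; rw [if_pos hno] at H
      have h1 := hc.1; have h2 := hc.2; omega

/-- Generalized Cabello–Liang–Li argument: for any LHV behavior satisfying the
zero-probability constraints, the degree of success `q − p` is nonpositive. -/
theorem stmt_8 (k d : ℕ) (hk : 2 ≤ k) (hd : 2 ≤ d)
    (P : ℕ → ℕ → ℕ → ℕ → ℝ)
    (hPpos : ∀ a b x y, a < d → b < d → x < k → y < k → 0 ≤ P a b x y)
    (hPnorm : ∀ x y, x < k → y < k →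
      ∑ a ∈ Finset.range d, ∑ b ∈ Finset.range d, P a b x y = 1)
    (Λ : Type) [Fintype Λ] (w : Λ → ℝ) (f g : Λ → ℕ → ℕ)
    (hw : ∀ l, 0 ≤ w l) (hw1 : ∑ l, w l = 1)
    (hf : ∀ l x, x < k → f l x < d) (hg : ∀ l y, y < k → g l y < d)
    (hP : ∀ a b x y, x < k → y < k → P a b x y =
      ∑ l, w l * (if f l x = a then (1 : ℝ) else 0) * (if g l y = b then (1 : ℝ) else 0))
    (hodd : ∀ i, 1 ≤ i → i ≤ k - 1 → Odd i →
      probGT d P i (i - 1) = 0 ∧ probGT d P (i - 1) i = 0)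
    (heven : ∀ i, 1 ≤ i → i ≤ k - 1 → Even i →
      probLT d P i (i - 1) = 0 ∧ probLT d P (i - 1) i = 0) :
    (if Odd k then probLT d P (k - 1) (k - 1) else probGT d P (k - 1) (k - 1))
      ≤ probLT d P 0 0 := by
  have hLT : ∀ x y, x < k → y < k →
      probLT d P x y = ∑ l, w l * (if f l x < g l y then (1:ℝ) else 0) := by
    intro x y hx hy
    unfold probLT
    rw [Finset.sum_congr rfl (fun a _ => Finset.sum_congr rfl (fun b _ => by
      rw [hP a b x y hx hy]))]
    exact prob_eq_aux d w (fun l => f l x) (fun l => g l y)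
      (fun l => hf l x hx) (fun l => hg l y hy) (· < ·)
  have hGT : ∀ x y, x < k → y < k →
      probGT d P x y = ∑ l, w l * (if g l y < f l x then (1:ℝ) else 0) := by
    intro x y hx hy
    unfold probGT
    rw [Finset.sum_congr rfl (fun a _ => Finset.sum_congr rfl (fun b _ => by
      rw [hP a b x y hx hy]))]
    exact prob_eq_aux d w (fun l => f l x) (fun l => g l y)
      (fun l => hf l x hx) (fun l => hg l y hy) (fun a b => b < a)
  have key0 : ∀ (c : Λ → Prop) (_ : DecidablePred c),
      (∑ l, w l * (if c l then (1:ℝ) else 0)) = 0 → ∀ l, w l ≠ 0 → ¬ c l := by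
    intro c _ hsum l hl hc
    have hnn : ∀ i ∈ Finset.univ, (0:ℝ) ≤ w i * (if c i then (1:ℝ) else 0) := by
      intro i _
      have : (0:ℝ) ≤ (if c i then (1:ℝ) else 0) := by split_ifs <;> norm_num
      exact mul_nonneg (hw i) this
    have := (Finset.sum_eq_zero_iff_of_nonneg hnn).mp hsum l (Finset.mem_univ l)
    rw [if_pos hc, mul_one] at this
    exact hl this
  have habc : ∀ l, w l ≠ 0 →
      (∀ i, 1 ≤ i → i ≤ k-1 → Odd i → f l i ≤ g l (i-1) ∧ f l (i-1) ≤ g l i) ∧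
      (∀ i, 1 ≤ i → i ≤ k-1 → Even i → g l (i-1) ≤ f l i ∧ g l i ≤ f l (i-1)) := by
    intro l hl
    constructor
    · intro i h1 h2 hoi
      have hik : i < k := by omega
      have hik' : i - 1 < k := by omega
      have e1 := (hodd i h1 h2 hoi).1
      rw [hGT i (i-1) hik hik'] at e1
      have e2 := (hodd i h1 h2 hoi).2
      rw [hGT (i-1) i hik' hik] at e2
      constructor
      · have := key0 (fun l => g l (i-1) < f l i) (by infer_instance) e1 l hl; omega
      · have := key0 (fun l => g l i < f l (i-1)) (by infer_instance) e2 l hl; omega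
    · intro i h1 h2 hei
      have hik : i < k := by omega
      have hik' : i - 1 < k := by omega
      have e1 := (heven i h1 h2 hei).1
      rw [hLT i (i-1) hik hik'] at e1
      have e2 := (heven i h1 h2 hei).2
      rw [hLT (i-1) i hik' hik] at e2
      constructor
      · have := key0 (fun l => f l i < g l (i-1)) (by infer_instance) e1 l hl; omega
      · have := key0 (fun l => f l (i-1) < g l i) (by infer_instance) e2 l hl; omega
  have hk1 : k - 1 < k := by omega
  rw [hLT 0 0 (by omega) (by omega)]
  by_cases hko : Odd k
  · rw [if_pos hko, hLT (k-1) (k-1) hk1 hk1]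
    apply Finset.sum_le_sum
    intro l _
    by_cases hl : w l = 0
    · simp [hl]
    · rcases habc l hl with ⟨ho, he⟩
      have hch := chain_aux k (f l) (g l) ho he (k-1) le_rfl
      have hek : Even (k-1) := by
        rw [Nat.even_iff]; rw [Nat.odd_iff] at hko; omega
      rw [if_pos hek] at hch
      apply mul_le_mul_of_nonneg_left _ (hw l)
      split_ifs with h1 h2 <;> try norm_num
      exact absurd (by omega : f l 0 < g l 0) h2
  · rw [if_neg hko, hGT (k-1) (k-1) hk1 hk1]
    apply Finset.sum_le_sum
    intro l _
    by_cases hl : w l = 0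
    · simp [hl]
    · rcases habc l hl with ⟨ho, he⟩
      have hch := chain_aux k (f l) (g l) ho he (k-1) le_rfl
      have hek : ¬ Even (k-1) := by
        rw [Nat.even_iff]; rw [Nat.odd_iff] at hko; omega
      rw [if_neg hek] at hch
      apply mul_le_mul_of_nonneg_left _ (hw l)
      split_ifs with h1 h2 <;> try norm_num
      exact absurd (by omega : f l 0 < g l 0) h2
end

section
/- Let k ≥ 2, d ≥ 2, and let P be a behavior in the bipartite k-input d-output Bell scenario admitting a local-hidden-variable model. Suppose P(A_i < B_{i−1}) = 0 and P(B_{i−1} < A_{i−1}) = 0 for every i ∈ {1,…,k−1}. Then P(A_{k−1} < B_{k−1}) ≤ P(A_0 < B_{k−1}). (Generalized FTI argument: the degree of success q − r, with q = P(A_{k−1} < B_{k−1}) and r = P(A_0 < B_{k−1}), is nonpositive for every LHV model.) -/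
lemma ind_sum (d u v : ℕ) (hu : u < d) (hv : v < d)
    (c : ℕ → ℕ → Prop) [DecidableRel c] :
    (∑ a ∈ Finset.range d, ∑ b ∈ Finset.range d,
      if c a b then (if u = a then (1:ℝ) else 0) * (if v = b then 1 else 0) else 0)
    = if c u v then 1 else 0 := by
  have h1 : ∀ a b : ℕ,
      (if c a b then (if u = a then (1:ℝ) else 0) * (if v = b then 1 else 0) else 0)
      = (if u = a then (if v = b then (if c a b then (1:ℝ) else 0) else 0) else 0) := by
    intro a b; split_ifs <;> ring
  simp_rw [h1]
  simp [Finset.sum_ite_eq, hu, hv]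

/-- Generalized FTI argument: for any LHV behavior satisfying the zero-probability
constraints `P(A_i < B_{i−1}) = 0` and `P(B_{i−1} < A_{i−1}) = 0` for
`i ∈ {1,…,k−1}`, the degree of success `q − r` is nonpositive. -/
theorem stmt_10 (k d : ℕ) (hk : 2 ≤ k) (hd : 2 ≤ d)
    (P : ℕ → ℕ → ℕ → ℕ → ℝ)
    (hPpos : ∀ a b x y, a < d → b < d → x < k → y < k → 0 ≤ P a b x y)
    (hPnorm : ∀ x y, x < k → y < k →
      ∑ a ∈ Finset.range d, ∑ b ∈ Finset.range d, P a b x y = 1)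
    (Λ : Type) [Fintype Λ] (w : Λ → ℝ) (f g : Λ → ℕ → ℕ)
    (hw : ∀ l, 0 ≤ w l) (hw1 : ∑ l, w l = 1)
    (hf : ∀ l x, x < k → f l x < d) (hg : ∀ l y, y < k → g l y < d)
    (hP : ∀ a b x y, x < k → y < k → P a b x y =
      ∑ l, w l * (if f l x = a then (1 : ℝ) else 0) * (if g l y = b then (1 : ℝ) else 0))
    (hzero : ∀ i, 1 ≤ i → i ≤ k - 1 →
      probLT d P i (i - 1) = 0 ∧ probGT d P (i - 1) (i - 1) = 0) :
    probLT d P (k - 1) (k - 1) ≤ probLT d P 0 (k - 1) := by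
  -- general expansion lemma
  have key : ∀ (c : ℕ → ℕ → Prop) (_ : DecidableRel c) (x y : ℕ), x < k → y < k →
      (∑ a ∈ Finset.range d, ∑ b ∈ Finset.range d, if c a b then P a b x y else 0)
      = ∑ l, w l * (if c (f l x) (g l y) then (1:ℝ) else 0) := by
    intro c hc x y hx hy
    calc (∑ a ∈ Finset.range d, ∑ b ∈ Finset.range d, if c a b then P a b x y else 0)
        = ∑ a ∈ Finset.range d, ∑ b ∈ Finset.range d, ∑ l,
            (if c a b then w l * (if f l x = a then (1:ℝ) else 0) *
              (if g l y = b then (1:ℝ) else 0) else 0) := by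
          refine Finset.sum_congr rfl fun a _ => Finset.sum_congr rfl fun b _ => ?_
          rw [hP a b x y hx hy]
          split_ifs with h
          · rfl
          · simp
      _ = ∑ l, ∑ a ∈ Finset.range d, ∑ b ∈ Finset.range d,
            (if c a b then w l * (if f l x = a then (1:ℝ) else 0) *
              (if g l y = b then (1:ℝ) else 0) else 0) := by
          exact Eq.trans (Finset.sum_congr rfl fun a _ => Finset.sum_comm) Finset.sum_comm
      _ = ∑ l, w l * (if c (f l x) (g l y) then (1:ℝ) else 0) := by
          refine Finset.sum_congr rfl fun l _ => ?_
          have h := ind_sum d (f l x) (g l y) (hf l x hx) (hg l y hy) c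
          rw [← h, Finset.mul_sum]
          refine Finset.sum_congr rfl fun a _ => ?_
          rw [Finset.mul_sum]
          refine Finset.sum_congr rfl fun b _ => ?_
          split_ifs <;> ring
  have hkey_lt : ∀ x y, x < k → y < k →
      probLT d P x y = ∑ l, w l * (if f l x < g l y then (1:ℝ) else 0) :=
    fun x y hx hy => key (· < ·) (fun _ _ => inferInstance) x y hx hy
  have hkey_gt : ∀ x y, x < k → y < k →
      probGT d P x y = ∑ l, w l * (if g l y < f l x then (1:ℝ) else 0) :=
    fun x y hx hy => key (fun a b => b < a) (fun _ _ => inferInstance) x y hx hy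
  -- from zero constraints, pointwise in l
  have hterm : ∀ (l : Λ), 0 < w l → ∀ i, 1 ≤ i → i ≤ k - 1 →
      ¬ (f l i < g l (i-1)) ∧ ¬ (g l (i-1) < f l (i-1)) := by
    intro l hl i h1 h2
    have hik : i < k := by omega
    have hik' : i - 1 < k := by omega
    obtain ⟨hz1, hz2⟩ := hzero i h1 h2
    rw [hkey_lt i (i-1) hik hik'] at hz1
    rw [hkey_gt (i-1) (i-1) hik' hik'] at hz2
    have hnn : ∀ (c : Prop) (_ : Decidable c) (l : Λ),
        0 ≤ w l * (if c then (1:ℝ) else 0) := by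
      intro c _ l; have := hw l; split_ifs <;> simp [this]
    have e1 := (Finset.sum_eq_zero_iff_of_nonneg
      (fun l _ => hnn _ _ l)).mp hz1 l (Finset.mem_univ l)
    have e2 := (Finset.sum_eq_zero_iff_of_nonneg
      (fun l _ => hnn _ _ l)).mp hz2 l (Finset.mem_univ l)
    constructor
    · intro hc; rw [if_pos hc, mul_one] at e1; exact absurd e1 (ne_of_gt hl)
    · intro hc; rw [if_pos hc, mul_one] at e2; exact absurd e2 (ne_of_gt hl)
  -- monotone chain
  have hchain : ∀ (l : Λ), 0 < w l → ∀ j, j ≤ k - 1 → f l 0 ≤ f l j := by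
    intro l hl j
    induction j with
    | zero => intro _; exact le_refl _
    | succ n ih =>
      intro hn
      have h1 := hterm l hl (n+1) (by omega) hn
      have hg1 : g l n ≤ f l (n+1) := by
        have := h1.1; simpa using not_lt.mp this
      have hf1 : f l n ≤ g l n := by
        have := h1.2; simpa using not_lt.mp this
      exact le_trans (ih (by omega)) (le_trans hf1 hg1)
  -- conclude
  have hk1 : k - 1 < k := by omega
  have h0 : 0 < k := by omega
  rw [hkey_lt (k-1) (k-1) hk1 hk1, hkey_lt 0 (k-1) h0 hk1]
  apply Finset.sum_le_sum
  intro l _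
  rcases (hw l).eq_or_lt with h | h
  · rw [← h]; simp
  · apply mul_le_mul_of_nonneg_left _ (hw l)
    split_ifs with h1 h2
    · exact le_refl _
    · exact absurd (lt_of_le_of_lt (hchain l h (k-1) le_rfl) h1) h2
    · norm_num
    · exact le_refl _
end

section
/- Let k ≥ 3 be odd and d ≥ 2. Then there exist permutations π_A and π_B of the input set {0,…,k−1} such that for every behavior P in the bipartite k-input d-output Bell scenario, the relabeled behavior P′ defined by P′(a,b|x′,y′) := P(a,b|π_A(x′), π_B(y′)) satisfies: P fulfills the generalized Hardy conditions (P(A_i > B_{i−1}) = 0 and P(A_{i−1} > B_i) = 0 for all odd i ∈ {1,…,k−1}; P(A_i < B_{i−1}) = 0 and P(A_{i−1} < B_i) = 0 for all even i ∈ {1,…,k−1}; and P(A_0 < B_0) = 0) if and only if P′ fulfills the generalized FTI conditions (P′(A_i < B_{i−1}) = 0 and P′(B_{i−1} < A_{i−1}) = 0 for all i ∈ {1,…,k−1}; and P′(A_0 < B_{k−1}) = 0); moreover P(A_{k−1} < B_{k−1}) = P′(A_{k−1} < B_{k−1}). (Theorem 1, odd-k case: the generalized ladder proof and the generalized FTI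 proof are equivalent up to relabeling of inputs.) -/
/-- The generalized Hardy (ladder-proof) zero-probability conditions. -/
def HardyConds (k d : ℕ) (P : ℕ → ℕ → ℕ → ℕ → ℝ) : Prop :=
  (∀ i, 1 ≤ i → i ≤ k - 1 → Odd i →
    probGT d P i (i - 1) = 0 ∧ probGT d P (i - 1) i = 0) ∧
  (∀ i, 1 ≤ i → i ≤ k - 1 → Even i →
    probLT d P i (i - 1) = 0 ∧ probLT d P (i - 1) i = 0) ∧
  probLT d P 0 0 = 0

/-- The generalized FTI zero-probability conditions. -/
def FTIConds (k d : ℕ) (P : ℕ → ℕ → ℕ → ℕ → ℝ) : Prop :=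
  (∀ i, 1 ≤ i → i ≤ k - 1 →
    probLT d P i (i - 1) = 0 ∧ probGT d P (i - 1) (i - 1) = 0) ∧
  probLT d P 0 (k - 1) = 0

/-- The Alice-input relabeling: `k-2, k-4, …, 1, 0, 2, …, k-1`. -/
def permA (k j : ℕ) : ℕ := if 2*j+2 ≤ k then k-2-2*j else 2*j+1-k

/-- The Bob-input relabeling: `k-3, k-5, …, 0, 1, 3, …, k-2, k-1`. -/
def permB (k j : ℕ) : ℕ :=
  if j+1 = k then k-1 else if 2*j+2 ≤ k then k-3-2*j else 2*j+2-k

/-- Theorem 1, odd-`k` case: there is a relabeling of inputs turning the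
generalized Hardy conditions into the generalized FTI conditions, preserving
the success probability `P(A_{k−1} < B_{k−1})`. -/
theorem stmt_11 (k d : ℕ) (hk : 3 ≤ k) (hkodd : Odd k) (hd : 2 ≤ d) :
    ∃ pA pB : ℕ → ℕ,
      Set.BijOn pA (Set.Iio k) (Set.Iio k) ∧ Set.BijOn pB (Set.Iio k) (Set.Iio k) ∧
      ∀ P : ℕ → ℕ → ℕ → ℕ → ℝ,
        (∀ a b x y, a < d → b < d → x < k → y < k → 0 ≤ P a b x y) →
        (∀ x y, x < k → y < k →
          ∑ a ∈ Finset.range d, ∑ b ∈ Finset.range d, P a b x y = 1) →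
        (HardyConds k d P ↔ FTIConds k d (fun a b x y => P a b (pA x) (pB y))) ∧
        probLT d P (k - 1) (k - 1)
          = probLT d (fun a b x y => P a b (pA x) (pB y)) (k - 1) (k - 1) := by
  obtain ⟨m, hm⟩ := hkodd
  refine ⟨permA k, permB k, ⟨?_, ?_, ?_⟩, ⟨?_, ?_, ?_⟩, ?_⟩
  · -- permA maps Iio k to Iio k
    intro j hj
    simp only [Set.mem_Iio] at *
    simp only [permA]
    split <;> omega
  · -- permA injective on Iio k
    intro j1 h1 j2 h2 he
    simp only [Set.mem_Iio] at h1 h2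
    simp only [permA] at he
    split at he <;> split at he <;> omega
  · -- permA surjective onto Iio k
    intro y hy
    simp only [Set.mem_Iio] at hy
    rcases Nat.even_or_odd y with h2 | h2
    · rw [Nat.even_iff] at h2
      exact ⟨(y+k-1)/2, by simp only [Set.mem_Iio]; omega,
        by simp only [permA]; split <;> omega⟩
    · rw [Nat.odd_iff] at h2
      exact ⟨(k-2-y)/2, by simp only [Set.mem_Iio]; omega,
        by simp only [permA]; split <;> omega⟩
  · -- permB maps Iio k to Iio k
    intro j hj
    simp only [Set.mem_Iio] at *
    simp only [permB]
    split
    · omega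
    · split <;> omega
  · -- permB injective on Iio k
    intro j1 h1 j2 h2 he
    simp only [Set.mem_Iio] at h1 h2
    simp only [permB] at he
    split at he <;> split at he <;> (try split at he) <;> (try split at he) <;> omega
  · -- permB surjective onto Iio k
    intro y hy
    simp only [Set.mem_Iio] at hy
    by_cases hyk : y = k-1
    · exact ⟨k-1, by simp only [Set.mem_Iio]; omega,
        by simp only [permB]; rw [if_pos (show k-1+1 = k by omega)]; omega⟩
    rcases Nat.even_or_odd y with h2 | h2
    · rw [Nat.even_iff] at h2
      refine ⟨(k-3-y)/2, by simp only [Set.mem_Iio]; omega, ?_⟩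
      simp only [permB]
      rw [if_neg (show ¬((k-3-y)/2+1 = k) by omega)]
      split <;> omega
    · rw [Nat.odd_iff] at h2
      refine ⟨(y+k-2)/2, by simp only [Set.mem_Iio]; omega, ?_⟩
      simp only [permB]
      rw [if_neg (show ¬((y+k-2)/2+1 = k) by omega)]
      split <;> omega
  · -- main statement
    intro P hpos hnorm
    have hLTc : ∀ x y, probLT d (fun a b x y => P a b (permA k x) (permB k y)) x y
        = probLT d P (permA k x) (permB k y) := fun _ _ => rfl
    have hGTc : ∀ x y, probGT d (fun a b x y => P a b (permA k x) (permB k y)) x y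
        = probGT d P (permA k x) (permB k y) := fun _ _ => rfl
    constructor
    · -- the equivalence of the two sets of conditions
      simp only [HardyConds, FTIConds, hLTc, hGTc]
      constructor
      · rintro ⟨Hodd, Heven, H00⟩
        refine ⟨fun i h1 h2 => ⟨?_, ?_⟩, ?_⟩
        · -- LT condition of FTI
          rcases lt_trichotomy (2*i) (k-1) with hc | hc | hc
          · have e1 : permA k i = k-2*i-1-1 := by
              simp only [permA]; split <;> omega
            have e2 : permB k (i-1) = k-2*i-1 := by
              simp only [permB]
              rw [if_neg (show ¬(i-1+1 = k) by omega)]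
              split <;> omega
            rw [e1, e2]
            exact (Heven (k-2*i-1) (by omega) (by omega)
              (by rw [Nat.even_iff]; omega)).2
          · have e1 : permA k i = 0 := by
              simp only [permA]; split <;> omega
            have e2 : permB k (i-1) = 0 := by
              simp only [permB]
              rw [if_neg (show ¬(i-1+1 = k) by omega)]
              split <;> omega
            rw [e1, e2]
            exact H00
          · have e1 : permA k i = 2*i+1-k := by
              simp only [permA]; split <;> omega
            have e2 : permB k (i-1) = 2*i+1-k-1 := by
              simp only [permB]
              rw [if_neg (show ¬(i-1+1 = k) by omega)]
              split <;> omega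
            rw [e1, e2]
            exact (Heven (2*i+1-k) (by omega) (by omega)
              (by rw [Nat.even_iff]; omega)).1
        · -- GT condition of FTI
          by_cases hc : 2*i ≤ k
          · have e1 : permA k (i-1) = k-2*i := by
              simp only [permA]; split <;> omega
            have e2 : permB k (i-1) = k-2*i-1 := by
              simp only [permB]
              rw [if_neg (show ¬(i-1+1 = k) by omega)]
              split <;> omega
            rw [e1, e2]
            exact (Hodd (k-2*i) (by omega) (by omega)
              (by rw [Nat.odd_iff]; omega)).1
          · have e1 : permA k (i-1) = 2*i-k-1 := by
              simp only [permA]; split <;> omega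
            have e2 : permB k (i-1) = 2*i-k := by
              simp only [permB]
              rw [if_neg (show ¬(i-1+1 = k) by omega)]
              split <;> omega
            rw [e1, e2]
            exact (Hodd (2*i-k) (by omega) (by omega)
              (by rw [Nat.odd_iff]; omega)).2
        · -- the last FTI condition
          have e1 : permA k 0 = k-1-1 := by
            simp only [permA]; split <;> omega
          have e2 : permB k (k-1) = k-1 := by
            simp only [permB]; rw [if_pos (show k-1+1 = k by omega)]
          rw [e1, e2]
          exact (Heven (k-1) (by omega) (by omega)
            (by rw [Nat.even_iff]; omega)).2
      · rintro ⟨F1, F2⟩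
        refine ⟨fun i h1 h2 hodd => ?_, fun i h1 h2 heven => ?_, ?_⟩
        · -- Hardy GT conditions (odd i)
          rw [Nat.odd_iff] at hodd
          constructor
          · have F := (F1 ((k-2-i)/2+1) (by omega) (by omega)).2
            have e1 : permA k ((k-2-i)/2+1-1) = i := by
              simp only [permA]; split <;> omega
            have e2 : permB k ((k-2-i)/2+1-1) = i-1 := by
              simp only [permB]
              rw [if_neg (show ¬((k-2-i)/2+1-1+1 = k) by omega)]
              split <;> omega
            rwa [e1, e2] at F
          · have F := (F1 ((k+i-2)/2+1) (by omega) (by omega)).2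
            have e1 : permA k ((k+i-2)/2+1-1) = i-1 := by
              simp only [permA]; split <;> omega
            have e2 : permB k ((k+i-2)/2+1-1) = i := by
              simp only [permB]
              rw [if_neg (show ¬((k+i-2)/2+1-1+1 = k) by omega)]
              split <;> omega
            rwa [e1, e2] at F
        · -- Hardy LT conditions (even i)
          rw [Nat.even_iff] at heven
          constructor
          · have F := (F1 ((k+i-1)/2) (by omega) (by omega)).1
            have e1 : permA k ((k+i-1)/2) = i := by
              simp only [permA]; split <;> omega
            have e2 : permB k ((k+i-1)/2-1) = i-1 := by
              simp only [permB]
              rw [if_neg (show ¬((k+i-1)/2-1+1 = k) by omega)]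
              split <;> omega
            rwa [e1, e2] at F
          · by_cases hik : i = k-1
            · subst hik
              have e1 : permA k 0 = k-1-1 := by
                simp only [permA]; split <;> omega
              have e2 : permB k (k-1) = k-1 := by
                simp only [permB]; rw [if_pos (show k-1+1 = k by omega)]
              rwa [e1, e2] at F2
            · have F := (F1 ((k-1-i)/2) (by omega) (by omega)).1
              have e1 : permA k ((k-1-i)/2) = i-1 := by
                simp only [permA]; split <;> omega
              have e2 : permB k ((k-1-i)/2-1) = i := by
                simp only [permB]
                rw [if_neg (show ¬((k-1-i)/2-1+1 = k) by omega)]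
                split <;> omega
              rwa [e1, e2] at F
        · -- Hardy P(A_0 < B_0) = 0
          have F := (F1 ((k-1)/2) (by omega) (by omega)).1
          have e1 : permA k ((k-1)/2) = 0 := by
            simp only [permA]; split <;> omega
          have e2 : permB k ((k-1)/2-1) = 0 := by
            simp only [permB]
            rw [if_neg (show ¬((k-1)/2-1+1 = k) by omega)]
            split <;> omega
          rwa [e1, e2] at F
    · -- the preserved success probability
      have e1 : permA k (k-1) = k-1 := by
        simp only [permA]; split <;> omega
      have e2 : permB k (k-1) = k-1 := by
        simp only [permB]; rw [if_pos (show k-1+1 = k by omega)]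
      rw [hLTc, e1, e2]
end

section
/- Let k ≥ 2 be even and d ≥ 2. Then there exist permutations π_A and π_B of the input set {0,…,k−1} such that for every behavior P in the bipartite k-input d-output Bell scenario, the relabeled behavior P′ defined by P′(a,b|x′,y′) := P(d−1−a, d−1−b | π_A(x′), π_B(y′)) satisfies: P fulfills the generalized Hardy conditions (P(A_i > B_{i−1}) = 0 and P(A_{i−1} > B_i) = 0 for all odd i ∈ {1,…,k−1}; P(A_i < B_{i−1}) = 0 and P(A_{i−1} < B_i) = 0 for all even i ∈ {1,…,k−1}; and P(A_0 < B_0) = 0) if and only if P′ fulfills the generalized FTI conditions (P′(A_i < B_{i−1}) = 0 and P′(B_{i−1} < A_{i−1}) = 0 for all i ∈ {1,…,k−1}; and P′(A_0 < B_{k−1}) = 0); moreover P(A_{k−1} > B_{k−1}) = P′(A_{k−1} < B_{k−1}). (Theorem 1, even-k case: the generalized ladder proof and the generalized FTI proof are equivalent up to relabeling of inputs and outputs, with outputs reversed via a ↦ d−1−a.) -/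
/-- Input relabeling for Alice. -/
def pAf (k j : ℕ) : ℕ := if 2*j+2 ≤ k then k-2-2*j else 2*j+1-k

/-- Input relabeling for Bob. -/
def pBf (k j : ℕ) : ℕ :=
  if j+1 = k then k-1 else if 2*j+4 ≤ k then k-3-2*j else 2*j+2-k

lemma sum_reflect_lt (d : ℕ) (Q : ℕ → ℕ → ℝ) :
    (∑ a ∈ Finset.range d, ∑ b ∈ Finset.range d,
        if a < b then Q (d-1-a) (d-1-b) else 0)
      = ∑ a ∈ Finset.range d, ∑ b ∈ Finset.range d, if b < a then Q a b else 0 := by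
  rw [← Finset.sum_range_reflect
      (fun a => ∑ b ∈ Finset.range d, if b < a then Q a b else 0) d]
  refine Finset.sum_congr rfl fun a ha => ?_
  rw [← Finset.sum_range_reflect
      (fun b => if b < d - 1 - a then Q (d - 1 - a) b else 0) d]
  refine Finset.sum_congr rfl fun b hb => ?_
  simp only [Finset.mem_range] at ha hb
  exact if_congr (by omega) rfl rfl

lemma sum_reflect_gt (d : ℕ) (Q : ℕ → ℕ → ℝ) :
    (∑ a ∈ Finset.range d, ∑ b ∈ Finset.range d,
        if b < a then Q (d-1-a) (d-1-b) else 0)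
      = ∑ a ∈ Finset.range d, ∑ b ∈ Finset.range d, if a < b then Q a b else 0 := by
  rw [← Finset.sum_range_reflect
      (fun a => ∑ b ∈ Finset.range d, if a < b then Q a b else 0) d]
  refine Finset.sum_congr rfl fun a ha => ?_
  rw [← Finset.sum_range_reflect
      (fun b => if d - 1 - a < b then Q (d - 1 - a) b else 0) d]
  refine Finset.sum_congr rfl fun b hb => ?_
  simp only [Finset.mem_range] at ha hb
  exact if_congr (by omega) rfl rfl

lemma probLT_rev (d : ℕ) (P : ℕ → ℕ → ℕ → ℕ → ℝ) (f g : ℕ → ℕ) (x y : ℕ) :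
    probLT d (fun a b x' y' => P (d-1-a) (d-1-b) (f x') (g y')) x y
      = probGT d P (f x) (g y) := by
  unfold probLT probGT
  exact sum_reflect_lt d (fun a b => P a b (f x) (g y))

lemma probGT_rev (d : ℕ) (P : ℕ → ℕ → ℕ → ℕ → ℝ) (f g : ℕ → ℕ) (x y : ℕ) :
    probGT d (fun a b x' y' => P (d-1-a) (d-1-b) (f x') (g y')) x y
      = probLT d P (f x) (g y) := by
  unfold probLT probGT
  exact sum_reflect_gt d (fun a b => P a b (f x) (g y))

/-- Theorem 1, even-`k` case: there is a relabeling of inputs and (reversed) outputs turning the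
generalized Hardy conditions into the generalized FTI conditions, preserving
the success probability: `P(A_{k−1} > B_{k−1}) = P′(A_{k−1} < B_{k−1})`. -/
theorem stmt_12 (k d : ℕ) (hk : 2 ≤ k) (hkeven : Even k) (hd : 2 ≤ d) :
    ∃ pA pB : ℕ → ℕ,
      Set.BijOn pA (Set.Iio k) (Set.Iio k) ∧ Set.BijOn pB (Set.Iio k) (Set.Iio k) ∧
      ∀ P : ℕ → ℕ → ℕ → ℕ → ℝ,
        (∀ a b x y, a < d → b < d → x < k → y < k → 0 ≤ P a b x y) →
        (∀ x y, x < k → y < k →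
          ∑ a ∈ Finset.range d, ∑ b ∈ Finset.range d, P a b x y = 1) →
        (HardyConds k d P ↔ FTIConds k d (fun a b x y => P (d - 1 - a) (d - 1 - b) (pA x) (pB y))) ∧
        probGT d P (k - 1) (k - 1)
          = probLT d (fun a b x y => P (d - 1 - a) (d - 1 - b) (pA x) (pB y)) (k - 1) (k - 1) := by
  obtain ⟨m, hm⟩ := hkeven
  have hm1 : 1 ≤ m := by omega
  refine ⟨pAf k, pBf k, ?_, ?_, ?_⟩
  · refine ⟨fun j hj => ?_, fun j1 h1 j2 h2 he => ?_, fun y hy => ?_⟩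
    · simp only [Set.mem_Iio] at *
      unfold pAf; split_ifs <;> omega
    · simp only [Set.mem_Iio] at h1 h2
      unfold pAf at he; split_ifs at he <;> omega
    · simp only [Set.mem_Iio, Set.mem_image] at *
      rcases Nat.even_or_odd y with ⟨t, ht⟩ | ⟨t, ht⟩
      · exact ⟨m-1-t, by omega, by unfold pAf; split_ifs <;> omega⟩
      · exact ⟨m+t, by omega, by unfold pAf; split_ifs <;> omega⟩
  · refine ⟨fun j hj => ?_, fun j1 h1 j2 h2 he => ?_, fun y hy => ?_⟩
    · simp only [Set.mem_Iio] at *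
      unfold pBf; split_ifs <;> omega
    · simp only [Set.mem_Iio] at h1 h2
      unfold pBf at he; split_ifs at he <;> omega
    · simp only [Set.mem_Iio, Set.mem_image] at *
      by_cases hy1 : y = k-1
      · exact ⟨k-1, by omega, by unfold pBf; split_ifs <;> omega⟩
      · rcases Nat.even_or_odd y with ⟨t, ht⟩ | ⟨t, ht⟩
        · exact ⟨m-1+t, by omega, by unfold pBf; split_ifs <;> omega⟩
        · exact ⟨m-2-t, by omega, by unfold pBf; split_ifs <;> omega⟩
  · intro P _ _
    constructor
    · constructor
      · rintro ⟨h1, h2, h3⟩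
        refine ⟨fun i hi1 hi2 => ⟨?_, ?_⟩, ?_⟩
        · rw [probLT_rev d P (pAf k) (pBf k)]
          by_cases hA : 2*i+2 ≤ k
          · have e1 : pAf k i = (k-1-2*i) - 1 := by unfold pAf; split_ifs <;> omega
            have e2 : pBf k (i-1) = k-1-2*i := by unfold pBf; split_ifs <;> omega
            rw [e1, e2]
            exact (h1 (k-1-2*i) (by omega) (by omega) ⟨m-1-i, by omega⟩).2
          · by_cases hB : 2*i ≤ k
            · have e1 : pAf k i = 1 := by unfold pAf; split_ifs <;> omega
              have e2 : pBf k (i-1) = 0 := by unfold pBf; split_ifs <;> omega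
              rw [e1, e2]
              have h := (h1 1 (by omega) (by omega) ⟨0, by omega⟩).1
              simpa using h
            · have e1 : pAf k i = 2*i+1-k := by unfold pAf; split_ifs <;> omega
              have e2 : pBf k (i-1) = (2*i+1-k) - 1 := by unfold pBf; split_ifs <;> omega
              rw [e1, e2]
              exact (h1 (2*i+1-k) (by omega) (by omega) ⟨i-m, by omega⟩).1
        · rw [probGT_rev d P (pAf k) (pBf k)]
          by_cases hA : 2*i+2 ≤ k
          · have e1 : pAf k (i-1) = k-2*i := by unfold pAf; split_ifs <;> omega
            have e2 : pBf k (i-1) = (k-2*i) - 1 := by unfold pBf; split_ifs <;> omega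
            rw [e1, e2]
            exact (h2 (k-2*i) (by omega) (by omega) ⟨m-i, by omega⟩).1
          · by_cases hB : 2*i ≤ k
            · have e1 : pAf k (i-1) = 0 := by unfold pAf; split_ifs <;> omega
              have e2 : pBf k (i-1) = 0 := by unfold pBf; split_ifs <;> omega
              rw [e1, e2]
              exact h3
            · have e1 : pAf k (i-1) = (2*i-k) - 1 := by unfold pAf; split_ifs <;> omega
              have e2 : pBf k (i-1) = 2*i-k := by unfold pBf; split_ifs <;> omega
              rw [e1, e2]
              exact (h2 (2*i-k) (by omega) (by omega) ⟨i-m, by omega⟩).2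
        · rw [probLT_rev d P (pAf k) (pBf k)]
          have e1 : pAf k 0 = (k-1) - 1 := by unfold pAf; split_ifs <;> omega
          have e2 : pBf k (k-1) = k-1 := by unfold pBf; split_ifs <;> omega
          rw [e1, e2]
          exact (h1 (k-1) (by omega) (by omega) ⟨m-1, by omega⟩).2
      · rintro ⟨f1, f2⟩
        refine ⟨fun i hi1 hi2 hio => ?_, fun i hi1 hi2 hie => ?_, ?_⟩
        · obtain ⟨t, ht⟩ := hio
          constructor
          · have h := (f1 (m+t) (by omega) (by omega)).1
            rw [probLT_rev d P (pAf k) (pBf k)] at h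
            have e1 : pAf k (m+t) = i := by unfold pAf; split_ifs <;> omega
            have e2 : pBf k (m+t-1) = i-1 := by unfold pBf; split_ifs <;> omega
            rwa [e1, e2] at h
          · by_cases hl : i = k-1
            · have h := f2
              rw [probLT_rev d P (pAf k) (pBf k)] at h
              have e1 : pAf k 0 = i-1 := by unfold pAf; split_ifs <;> omega
              have e2 : pBf k (k-1) = i := by unfold pBf; split_ifs <;> omega
              rwa [e1, e2] at h
            · have h := (f1 (m-1-t) (by omega) (by omega)).1
              rw [probLT_rev d P (pAf k) (pBf k)] at h
              have e1 : pAf k (m-1-t) = i-1 := by unfold pAf; split_ifs <;> omega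
              have e2 : pBf k (m-1-t-1) = i := by unfold pBf; split_ifs <;> omega
              rwa [e1, e2] at h
        · obtain ⟨t, ht⟩ := hie
          constructor
          · have h := (f1 (m-t) (by omega) (by omega)).2
            rw [probGT_rev d P (pAf k) (pBf k)] at h
            have e1 : pAf k (m-t-1) = i := by unfold pAf; split_ifs <;> omega
            have e2 : pBf k (m-t-1) = i-1 := by unfold pBf; split_ifs <;> omega
            rwa [e1, e2] at h
          · have h := (f1 (m+t) (by omega) (by omega)).2
            rw [probGT_rev d P (pAf k) (pBf k)] at h
            have e1 : pAf k (m+t-1) = i-1 := by unfold pAf; split_ifs <;> omega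
            have e2 : pBf k (m+t-1) = i := by unfold pBf; split_ifs <;> omega
            rwa [e1, e2] at h
        · have h := (f1 m (by omega) (by omega)).2
          rw [probGT_rev d P (pAf k) (pBf k)] at h
          have e1 : pAf k (m-1) = 0 := by unfold pAf; split_ifs <;> omega
          have e2 : pBf k (m-1) = 0 := by unfold pBf; split_ifs <;> omega
          rwa [e1, e2] at h
    · rw [probLT_rev d P (pAf k) (pBf k)]
      have e1 : pAf k (k-1) = k-1 := by unfold pAf; split_ifs <;> omega
      have e2 : pBf k (k-1) = k-1 := by unfold pBf; split_ifs <;> omega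
      rw [e1, e2]
end

section
/- Let θ, α, β ∈ [0, π], let |ψ⟩ = sinθ(cosα|0⟩ − sinα|1⟩)|1⟩ + cosθ|1⟩|0⟩ ∈ ℂ²⊗ℂ², and let A₀ = σ_z, A₁ = cos(2α)σ_z − sin(2α)σ_x, B₀ = σ_z, B₁ = cos(2β)σ_z − sin(2β)σ_x. With the Born-rule probabilities P(a,b|x,y) = ⟨ψ| Π^{A_x}_a ⊗ Π^{B_y}_b |ψ⟩ where Π^O_a = (I + (−1)^a O)/2, the two zero-probability constraints of the FTI argument hold: P(0,0|0,0) = 0 and P(1,1|1,0) = 0. -/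
noncomputable section

/-- The Pauli matrix `σ_z`. -/
def pauliZ : Matrix (Fin 2) (Fin 2) ℂ := !![1, 0; 0, -1]

/-- The Pauli matrix `σ_x`. -/
def pauliX : Matrix (Fin 2) (Fin 2) ℂ := !![0, 1; 1, 0]

/-- The outcome-`a` projector `Π^O_a = (I + (−1)^a O)/2` of a ±1-valued observable `O`. -/
def outProj (O : Matrix (Fin 2) (Fin 2) ℂ) (a : Fin 2) : Matrix (Fin 2) (Fin 2) ℂ :=
  ((1 : ℂ) / 2) • (1 + ((-1 : ℂ) ^ (a : ℕ)) • O)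

/-- Alice's observables: `A 0 = σ_z`, `A 1 = cos(2α)σ_z − sin(2α)σ_x`. -/
def Aobs (α : ℝ) (x : Fin 2) : Matrix (Fin 2) (Fin 2) ℂ :=
  if x = 0 then pauliZ
  else (Real.cos (2 * α) : ℂ) • pauliZ - (Real.sin (2 * α) : ℂ) • pauliX

/-- Bob's observables: `B 0 = σ_z`, `B 1 = cos(2β)σ_z − sin(2β)σ_x`. -/
def Bobs (β : ℝ) (y : Fin 2) : Matrix (Fin 2) (Fin 2) ℂ :=
  if y = 0 then pauliZ
  else (Real.cos (2 * β) : ℂ) • pauliZ - (Real.sin (2 * β) : ℂ) • pauliX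

/-- Coefficients of `|ψ⟩ = sinθ(cosα|0⟩ − sinα|1⟩)|1⟩ + cosθ|1⟩|0⟩` in the basis `|ij⟩`:
`hardyState θ α i j` is the coefficient of `|i⟩|j⟩`. -/
def hardyState (θ α : ℝ) : Fin 2 → Fin 2 → ℂ :=
  fun i j =>
    if i = 0 then (if j = 0 then 0 else (Real.sin θ * Real.cos α : ℝ))
    else (if j = 0 then (Real.cos θ : ℝ) else (-(Real.sin θ * Real.sin α) : ℝ))

/-- `⟨ψ| M ⊗ N |ψ⟩` for a two-qubit vector with coefficients `ψ i j`. -/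
def born (ψ : Fin 2 → Fin 2 → ℂ) (M N : Matrix (Fin 2) (Fin 2) ℂ) : ℂ :=
  ∑ i, ∑ j, ∑ i', ∑ j', (starRingEnd ℂ) (ψ i j) * M i i' * N j j' * ψ i' j'

/-- The Born-rule behavior `P(a,b|x,y) = ⟨ψ| Π^{A_x}_a ⊗ Π^{B_y}_b |ψ⟩` for the Hardy
state and the observables above. -/
def bornProb (θ α β : ℝ) (a b x y : Fin 2) : ℂ :=
  born (hardyState θ α) (outProj (Aobs α x) a) (outProj (Bobs β y) b)

/-- The two zero-probability constraints of the FTI argument hold for the Hardy state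
and observables: `P(0,0|0,0) = 0` and `P(1,1|1,0) = 0`. -/
theorem stmt_13 (θ α β : ℝ) (hθ : θ ∈ Set.Icc 0 Real.pi) (hα : α ∈ Set.Icc 0 Real.pi)
    (hβ : β ∈ Set.Icc 0 Real.pi) :
    bornProb θ α β 0 0 0 0 = 0 ∧ bornProb θ α β 1 1 1 0 = 0 := by
  constructor
  · simp [bornProb, born, hardyState, outProj, Aobs, Bobs, pauliZ, pauliX,
      Fin.sum_univ_two, Matrix.one_apply, Matrix.smul_apply, Matrix.add_apply,
      Matrix.sub_apply, Complex.conj_ofReal]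
  · simp [bornProb, born, hardyState, outProj, Aobs, Bobs, pauliZ, pauliX,
      Fin.sum_univ_two, Matrix.one_apply, Matrix.smul_apply, Matrix.add_apply,
      Matrix.sub_apply, Real.sin_two_mul, Real.cos_two_mul', Complex.conj_ofReal]
    push_cast
    simp only [← Complex.sin_conj, ← Complex.cos_conj, Complex.conj_ofReal]
    ring_nf
    linear_combination (-(Complex.sin (θ:ℂ) ^ 2 / 2) *
      (Complex.sin (α:ℂ) ^ 2 + Complex.cos (α:ℂ) ^ 2)) *
      Complex.sin_sq_add_cos_sq (α:ℂ)

end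
end

section
/- Let θ, α, β ∈ [0, π], let |ψ⟩ = sinθ(cosα|0⟩ − sinα|1⟩)|1⟩ + cosθ|1⟩|0⟩ ∈ ℂ²⊗ℂ², and let A₀ = σ_z, A₁ = cos(2α)σ_z − sin(2α)σ_x, B₀ = σ_z, B₁ = cos(2β)σ_z − sin(2β)σ_x. With the Born-rule probabilities P(a,b|x,y) = ⟨ψ| Π^{A_x}_a ⊗ Π^{B_y}_b |ψ⟩ where Π^O_a = (I + (−1)^a O)/2, the degree of success of the FTI argument satisfies P(1,1|1,1) − P(1,1|0,1) = (1/2)·sinα·[(cos2β·cos2θ − 1)·sinα + sin2β·sin2θ]. -/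
noncomputable section

/-- Degree of success of the FTI argument for the Hardy state and observables:
`P(1,1|1,1) − P(1,1|0,1) = (1/2)·sinα·[(cos2β·cos2θ − 1)·sinα + sin2β·sin2θ]`. -/
theorem stmt_14 (θ α β : ℝ) (hθ : θ ∈ Set.Icc 0 Real.pi) (hα : α ∈ Set.Icc 0 Real.pi)
    (hβ : β ∈ Set.Icc 0 Real.pi) :
    bornProb θ α β 1 1 1 1 - bornProb θ α β 1 1 0 1 =
      ((1 / 2 * Real.sin α *
        ((Real.cos (2 * β) * Real.cos (2 * θ) - 1) * Real.sin α +
          Real.sin (2 * β) * Real.sin (2 * θ)) : ℝ) : ℂ) := by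
  simp only [bornProb, born, hardyState, outProj, Aobs, Bobs, pauliZ, pauliX,
    Fin.sum_univ_two]
  simp only [Matrix.smul_apply, Matrix.add_apply, Matrix.sub_apply, Matrix.one_apply,
    Matrix.cons_val', Matrix.cons_val_zero, Matrix.cons_val_one, Matrix.head_cons,
    Matrix.head_fin_const, Matrix.empty_val', Matrix.cons_val_fin_one,
    Fin.isValue, if_true, if_false, Complex.conj_ofReal, map_zero, smul_eq_mul]
  norm_num [Complex.conj_ofReal]
  simp only [← Complex.ofReal_ofNat, ← Complex.ofReal_mul, ← Complex.ofReal_sin,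
    ← Complex.ofReal_cos, Complex.conj_ofReal]
  norm_cast
  simp only [Real.sin_two_mul, Real.cos_two_mul]
  have h1 := Real.sin_sq_add_cos_sq θ
  have h2 := Real.sin_sq_add_cos_sq α
  linear_combination
    (-1 + Real.cos β ^ 2 + Real.cos α ^ 2 - Real.cos α ^ 2 * Real.cos β ^ 2 + Real.sin α ^ 2
      - 2 * Real.sin α ^ 2 * Real.cos β ^ 2) * h1 +
    (1 - Real.cos β ^ 2 - Real.sin θ ^ 2 + Real.sin θ ^ 2 * Real.cos β ^ 2
      - Real.sin θ ^ 2 * Real.cos α ^ 2 * Real.cos β ^ 2) * h2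

end
end

section
/- Let C ∈ [0,1] and choose θ = β = π/4 and α ∈ [0, π/2] with cosα = C. Then the two-qubit state |ψ⟩ = sinθ(cosα|0⟩ − sinα|1⟩)|1⟩ + cosθ|1⟩|0⟩ has concurrence 2·|c₀₀·c₁₁ − c₀₁·c₁₀| = C, and with the observables A₀ = σ_z, A₁ = cos(2α)σ_z − sin(2α)σ_x, B₀ = σ_z, B₁ = cos(2β)σ_z − sin(2β)σ_x and Born-rule probabilities P(a,b|x,y) = ⟨ψ| Π^{A_x}_a ⊗ Π^{B_y}_b |ψ⟩ (with Π^O_a = (I + (−1)^a O)/2), the degree of success of the FTI argument equals P(1,1|1,1) − P(1,1|0,1) = (√(1−C²)/2)·(1 − √(1−C²)). -/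
noncomputable section

/-- For `θ = β = π/4` and `cosα = C ∈ [0,1]`, the Hardy state has concurrence `C` and
the FTI degree of success equals `(√(1−C²)/2)·(1 − √(1−C²))`. -/
theorem stmt_16 (C : ℝ) (hC : C ∈ Set.Icc 0 1) (θ β α : ℝ)
    (hθ : θ = Real.pi / 4) (hβ : β = Real.pi / 4)
    (hα : α ∈ Set.Icc 0 (Real.pi / 2)) (hcos : Real.cos α = C) :
    2 * ‖hardyState θ α 0 0 * hardyState θ α 1 1 - hardyState θ α 0 1 * hardyState θ α 1 0‖
      = C ∧
    bornProb θ α β 1 1 1 1 - bornProb θ α β 1 1 0 1 =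
      ((Real.sqrt (1 - C ^ 2) / 2 * (1 - Real.sqrt (1 - C ^ 2)) : ℝ) : ℂ) := by
  obtain ⟨hC0, hC1⟩ := hC
  obtain ⟨hα0, hα1⟩ := hα
  have hs0 : 0 ≤ Real.sin α := Real.sin_nonneg_of_nonneg_of_le_pi hα0
    (hα1.trans (by linarith [Real.pi_pos]))
  set s := Real.sin α with hsdef
  have hs2 : s ^ 2 = 1 - C ^ 2 := by
    have := Real.sin_sq_add_cos_sq α
    rw [hcos] at this; nlinarith
  have hsq : Real.sqrt (1 - C ^ 2) = s := by
    rw [← hs2, Real.sqrt_sq hs0]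
  have hst : Real.sin θ = Real.sqrt 2 / 2 := by rw [hθ, Real.sin_pi_div_four]
  have hct : Real.cos θ = Real.sqrt 2 / 2 := by rw [hθ, Real.cos_pi_div_four]
  have hr2 : Real.sqrt 2 ^ 2 = 2 := Real.sq_sqrt (by norm_num)
  have hc2a : Real.cos (2 * α) = 2 * C ^ 2 - 1 := by
    rw [Real.cos_two_mul, hcos]
  have hs2a : Real.sin (2 * α) = 2 * s * C := by
    rw [Real.sin_two_mul, hcos]
  have hc2b : Real.cos (2 * β) = 0 := by
    rw [hβ, show 2 * (Real.pi / 4) = Real.pi / 2 by ring, Real.cos_pi_div_two]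
  have hs2b : Real.sin (2 * β) = 1 := by
    rw [hβ, show 2 * (Real.pi / 4) = Real.pi / 2 by ring, Real.sin_pi_div_two]
  constructor
  · simp only [hardyState, Fin.isValue, reduceIte, one_ne_zero]
    rw [zero_mul, zero_sub, norm_neg, ← Complex.ofReal_mul,
      Complex.norm_real, Real.norm_eq_abs, hst, hct, hcos, abs_of_nonneg (by positivity)]
    nlinarith [Real.sqrt_nonneg 2]
  · simp only [bornProb, born, outProj, Aobs, Bobs, hardyState, pauliZ, pauliX,
      Fin.sum_univ_two, Fin.isValue, reduceIte, one_ne_zero, Fin.val_one, Fin.val_zero,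
      pow_one, pow_zero, Matrix.smul_apply, Matrix.add_apply, Matrix.sub_apply,
      Matrix.one_apply, Matrix.cons_val', Matrix.cons_val_zero, Matrix.cons_val_one,
      Matrix.head_cons, Matrix.head_fin_const, Matrix.empty_val', Matrix.cons_val_fin_one,
      Complex.conj_ofReal, smul_eq_mul]
    rw [hsq, hst, hct, hc2a, hs2a, hc2b, hs2b, hcos]
    rw [show Real.sin α = s from rfl] -- ensure `s` form
    simp only [Matrix.of_apply, Matrix.cons_val', Matrix.cons_val_zero, Matrix.cons_val_one,
      Matrix.head_cons, Matrix.head_fin_const, Matrix.empty_val', Matrix.cons_val_fin_one,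
      Complex.conj_ofReal, map_zero]
    push_cast
    have hr2' : (Real.sqrt 2 : ℂ) ^ 2 = 2 := by exact_mod_cast hr2
    have hs2' : (s : ℂ) ^ 2 = 1 - (C : ℂ) ^ 2 := by exact_mod_cast hs2
    linear_combination
      ((C : ℂ) ^ 2 / 4 - (C : ℂ) ^ 4 / 8 - (s : ℂ) ^ 2 * (C : ℂ) ^ 2 / 8 - 1 / 8
          + (s : ℂ) / 4 - (s : ℂ) ^ 2 / 8) * hr2' +
        (1 / 4 - (C : ℂ) ^ 2 / 4) * hs2'

end
end

section
/- Let θ, α, β ∈ (0, π/2) satisfy tanθ·sinα = tanβ, let |ψ⟩ = sinθ(cosα|0⟩ − sinα|1⟩)|1⟩ + cosθ|1⟩|0⟩ ∈ ℂ²⊗ℂ², and let A₀ = σ_z, A₁ = cos(2α)σ_z − sin(2α)σ_x, B₀ = σ_z, B₁ = cos(2β)σ_z − sin(2β)σ_x, with Born-rule probabilities P(a,b|x,y) = ⟨ψ| Π^{A_x}_a ⊗ Π^{B_y}_b |ψ⟩ where Π^O_a = (I + (−1)^a O)/2. Then all three zero-probability constraints of Hardy's paradox hold, P(0,0|0,0)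 = 0, P(1,1|0,1) = 0, P(1,1|1,0) = 0, and the success probability equals P(1,1|1,1) = (cosθ·cosα·sinβ)². -/
noncomputable section

set_option maxHeartbeats 1000000 in
/-- Under the Hardy constraint `tanθ·sinα = tanβ`, all three zero-probability
constraints of Hardy's paradox hold and the success probability equals
`(cosθ·cosα·sinβ)²`. -/
theorem stmt_17 (θ α β : ℝ) (hθ : θ ∈ Set.Ioo 0 (Real.pi / 2))
    (hα : α ∈ Set.Ioo 0 (Real.pi / 2)) (hβ : β ∈ Set.Ioo 0 (Real.pi / 2))
    (hcon : Real.tan θ * Real.sin α = Real.tan β) :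
    bornProb θ α β 0 0 0 0 = 0 ∧ bornProb θ α β 1 1 0 1 = 0 ∧
    bornProb θ α β 1 1 1 0 = 0 ∧
    bornProb θ α β 1 1 1 1 = (((Real.cos θ * Real.cos α * Real.sin β) ^ 2 : ℝ) : ℂ) := by
  have hct : Real.cos θ ≠ 0 := (Real.cos_pos_of_mem_Ioo
    ⟨by linarith [hθ.1, Real.pi_pos], hθ.2⟩).ne'
  have hcb : Real.cos β ≠ 0 := (Real.cos_pos_of_mem_Ioo
    ⟨by linarith [hβ.1, Real.pi_pos], hβ.2⟩).ne'
  have h : Real.sin θ * Real.sin α * Real.cos β = Real.cos θ * Real.sin β := by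
    rw [Real.tan_eq_sin_div_cos, Real.tan_eq_sin_div_cos] at hcon
    field_simp at hcon
    linarith [hcon]
  have hC : Complex.sin θ * Complex.sin α * Complex.cos β
      = Complex.cos θ * Complex.sin β := by
    have := congrArg (Complex.ofReal) h
    push_cast at this
    exact_mod_cast this
  have hpa : Complex.sin (α : ℂ) ^ 2 + Complex.cos (α : ℂ) ^ 2 = 1 :=
    Complex.sin_sq_add_cos_sq _
  have hpb : Complex.sin (β : ℂ) ^ 2 + Complex.cos (β : ℂ) ^ 2 = 1 :=
    Complex.sin_sq_add_cos_sq _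
  set x := Complex.sin (θ : ℂ)
  set X := Complex.cos (θ : ℂ)
  set a := Complex.sin (α : ℂ)
  set A := Complex.cos (α : ℂ)
  set b := Complex.sin (β : ℂ)
  set B := Complex.cos (β : ℂ)
  refine ⟨?_, ?_, ?_, ?_⟩
  · simp only [bornProb, born, hardyState, outProj, Aobs, Bobs, pauliZ, pauliX,
      Fin.sum_univ_two, Fin.isValue]
    norm_num [-Complex.ofReal_sin, -Complex.ofReal_cos, Matrix.smul_apply, Matrix.add_apply,
      Matrix.sub_apply, Matrix.one_apply, Complex.conj_ofReal, Real.cos_two_mul',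
      Real.sin_two_mul]
  · simp only [bornProb, born, hardyState, outProj, Aobs, Bobs, pauliZ, pauliX,
      Fin.sum_univ_two, Fin.isValue]
    norm_num [-Complex.ofReal_sin, -Complex.ofReal_cos, Matrix.smul_apply, Matrix.add_apply,
      Matrix.sub_apply, Matrix.one_apply, Complex.conj_ofReal, Real.cos_two_mul',
      Real.sin_two_mul]
    push_cast
    linear_combination (x * a * B - X * b) * hC - ((x ^ 2 * a ^ 2 + X ^ 2) / 2) * hpb
  · simp only [bornProb, born, hardyState, outProj, Aobs, Bobs, pauliZ, pauliX,
      Fin.sum_univ_two, Fin.isValue]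
    norm_num [-Complex.ofReal_sin, -Complex.ofReal_cos, Matrix.smul_apply, Matrix.add_apply,
      Matrix.sub_apply, Matrix.one_apply, Complex.conj_ofReal, Real.cos_two_mul',
      Real.sin_two_mul]
    push_cast
    linear_combination (-(x ^ 2 * a ^ 2 + x ^ 2 * A ^ 2) / 2) * hpa
  · simp only [bornProb, born, hardyState, outProj, Aobs, Bobs, pauliZ, pauliX,
      Fin.sum_univ_two, Fin.isValue]
    norm_num [-Complex.ofReal_sin, -Complex.ofReal_cos, Matrix.smul_apply, Matrix.add_apply,
      Matrix.sub_apply, Matrix.one_apply, Complex.conj_ofReal, Real.cos_two_mul',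
      Real.sin_two_mul]
    push_cast
    linear_combination
      (-(1:ℂ)/4 * x ^ 2 * a ^ 2 + 1/4 * x ^ 2 * a ^ 2 * b ^ 2 + 1/4 * X ^ 2
        - 3/4 * X ^ 2 * b ^ 2 + B * X * x * a * b - 1/4 * B ^ 2 * x ^ 2 * a ^ 2
        - 1/4 * B ^ 2 * X ^ 2 - 1/4 * A ^ 2 * x ^ 2 + 1/4 * A ^ 2 * x ^ 2 * b ^ 2
        - 1/4 * A ^ 2 * B ^ 2 * x ^ 2) * hpa
      + (-(1:ℂ)/2 * X ^ 2 + 1/2 * X ^ 2 * a ^ 2) * hpb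

end
end

section
/- Let C ∈ (0,1). Then the supremum of (cosθ·cosα·sinβ)² over all θ, α, β ∈ (0, π/2) satisfying the Hardy constraint tanθ·sinα = tanβ and the fixed-concurrence constraint sin2θ·cosα = C equals C²·(1−C)/(2−C)², and this supremum is attained (in particular at a point where cos²β = C/(2−C)). (Maximal success probability of Hardy's paradox for two-qubit pure states of given concurrence C.) -/
set_option maxHeartbeats 1000000


open Real

/-- Maximal success probability of Hardy's paradox for two-qubit pure states of given
concurrence `C`: the supremum of `(cosθ·cosα·sinβ)²` over `θ, α, β ∈ (0, π/2)` subject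
to the Hardy constraint `tanθ·sinα = tanβ` and fixed concurrence `sin2θ·cosα = C`
equals `C²·(1−C)/(2−C)²`, attained in particular at a point where `cos²β = C/(2−C)`. -/
theorem stmt_18 (C : ℝ) (hC : C ∈ Set.Ioo 0 1) :
    IsGreatest
      {p : ℝ | ∃ θ α β : ℝ, θ ∈ Set.Ioo 0 (π / 2) ∧ α ∈ Set.Ioo 0 (π / 2) ∧
        β ∈ Set.Ioo 0 (π / 2) ∧ Real.tan θ * Real.sin α = Real.tan β ∧
        Real.sin (2 * θ) * Real.cos α = C ∧
        p = (Real.cos θ * Real.cos α * Real.sin β) ^ 2}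
      (C ^ 2 * (1 - C) / (2 - C) ^ 2) ∧
    ∃ θ α β : ℝ, θ ∈ Set.Ioo 0 (π / 2) ∧ α ∈ Set.Ioo 0 (π / 2) ∧
      β ∈ Set.Ioo 0 (π / 2) ∧ Real.tan θ * Real.sin α = Real.tan β ∧
      Real.sin (2 * θ) * Real.cos α = C ∧
      Real.cos β ^ 2 = C / (2 - C) ∧
      (Real.cos θ * Real.cos α * Real.sin β) ^ 2 = C ^ 2 * (1 - C) / (2 - C) ^ 2 := by
  obtain ⟨hC0, hC1⟩ := hC
  have h2C : (0:ℝ) < 2 - C := by linarith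
  -- the witness
  have hwit : ∃ θ α β : ℝ, θ ∈ Set.Ioo 0 (π / 2) ∧ α ∈ Set.Ioo 0 (π / 2) ∧
      β ∈ Set.Ioo 0 (π / 2) ∧ Real.tan θ * Real.sin α = Real.tan β ∧
      Real.sin (2 * θ) * Real.cos α = C ∧
      Real.cos β ^ 2 = C / (2 - C) ∧
      (Real.cos θ * Real.cos α * Real.sin β) ^ 2 = C ^ 2 * (1 - C) / (2 - C) ^ 2 := by
    obtain ⟨x, hxdef⟩ : ∃ x : ℝ, x = Real.sqrt (C / 2) := ⟨_, rfl⟩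
    obtain ⟨y, hydef⟩ : ∃ y : ℝ, y = Real.sqrt (C / (2 - C)) := ⟨_, rfl⟩
    have hx2 : x ^ 2 = C / 2 := by rw [hxdef]; exact Real.sq_sqrt (by positivity)
    have hy2 : y ^ 2 = C / (2 - C) := by rw [hydef]; exact Real.sq_sqrt (by positivity)
    have hx0 : 0 < x := by rw [hxdef]; exact Real.sqrt_pos.mpr (by positivity)
    have hy0 : 0 < y := by rw [hydef]; exact Real.sqrt_pos.mpr (by positivity)
    have hx1 : x < 1 := by nlinarith
    have hy1 : y < 1 := by
      have : C / (2 - C) < 1 := (div_lt_one h2C).mpr (by linarith)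
      nlinarith
    refine ⟨Real.arccos x, Real.arccos y, Real.arccos y, ?_, ?_, ?_, ?_, ?_, ?_, ?_⟩
    · exact ⟨Real.arccos_pos.mpr hx1, Real.arccos_lt_pi_div_two.mpr hx0⟩
    · exact ⟨Real.arccos_pos.mpr hy1, Real.arccos_lt_pi_div_two.mpr hy0⟩
    · exact ⟨Real.arccos_pos.mpr hy1, Real.arccos_lt_pi_div_two.mpr hy0⟩
    all_goals
      have hcx : Real.cos (Real.arccos x) = x := Real.cos_arccos (by linarith) (by linarith)
      have hcy : Real.cos (Real.arccos y) = y := Real.cos_arccos (by linarith) (by linarith)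
      have hsx : Real.sin (Real.arccos x) = Real.sqrt (1 - x ^ 2) := Real.sin_arccos x
      have hsy : Real.sin (Real.arccos y) = Real.sqrt (1 - y ^ 2) := Real.sin_arccos y
      have h1x : (0:ℝ) ≤ 1 - x ^ 2 := by rw [hx2]; linarith
      have harg : (1 - x ^ 2) * (C / (2 - C)) = C / 2 := by
        rw [hx2]; field_simp
      have hprod : Real.sqrt (1 - x ^ 2) * y = x := by
        rw [hydef, ← Real.sqrt_mul h1x, harg]
        exact hxdef.symm
      have hsx2 : Real.sin (Real.arccos x) ^ 2 = 1 - x ^ 2 := by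
        rw [hsx]; exact Real.sq_sqrt (by nlinarith)
      have hsy2 : Real.sin (Real.arccos y) ^ 2 = 1 - y ^ 2 := by
        rw [hsy]; exact Real.sq_sqrt (by nlinarith)
    · -- tan constraint
      have key2 : Real.sin (Real.arccos x) * y = x := by rw [hsx]; exact hprod
      rw [Real.tan_eq_sin_div_cos, Real.tan_eq_sin_div_cos, hcx, hcy,
        div_mul_eq_mul_div, div_eq_div_iff (ne_of_gt hx0) (ne_of_gt hy0)]
      linear_combination Real.sin (Real.arccos y) * key2
    · -- concurrence constraint
      have key2 : Real.sin (Real.arccos x) * y = x := by rw [hsx]; exact hprod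
      rw [Real.sin_two_mul, hcx, hcy]
      linear_combination 2 * x * key2 + 2 * hx2
    · rw [hcy]; exact hy2
    · rw [hcx, hcy]
      rw [show (x * y * Real.sin (Real.arccos y)) ^ 2
          = x ^ 2 * y ^ 2 * Real.sin (Real.arccos y) ^ 2 by ring, hsy2, hx2, hy2]
      field_simp
      ring
  refine ⟨⟨?_, ?_⟩, hwit⟩
  · -- membership
    obtain ⟨θ, α, β, h1, h2, h3, h4, h5, _, h7⟩ := hwit
    exact ⟨θ, α, β, h1, h2, h3, h4, h5, h7.symm⟩
  · -- upper bound
    rintro p ⟨θ, α, β, hθ, hα, hβ, htan, hCc, hpeq⟩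
    have haθ : 0 < Real.cos θ := Real.cos_pos_of_mem_Ioo
      ⟨by linarith [hθ.1, pi_pos], hθ.2⟩
    have hcα : 0 < Real.cos α := Real.cos_pos_of_mem_Ioo
      ⟨by linarith [hα.1, pi_pos], hα.2⟩
    have hcβ : 0 < Real.cos β := Real.cos_pos_of_mem_Ioo
      ⟨by linarith [hβ.1, pi_pos], hβ.2⟩
    have hbθ : 0 < Real.sin θ := Real.sin_pos_of_pos_of_lt_pi hθ.1
      (by linarith [hθ.2, pi_pos])
    have hsα : 0 < Real.sin α := Real.sin_pos_of_pos_of_lt_pi hα.1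
      (by linarith [hα.2, pi_pos])
    have hsβ : 0 < Real.sin β := Real.sin_pos_of_pos_of_lt_pi hβ.1
      (by linarith [hβ.2, pi_pos])
    set a := Real.cos θ
    set b := Real.sin θ
    set c := Real.cos α
    set s := Real.sin α
    set cb := Real.cos β
    set sb := Real.sin β
    have h1 : a ^ 2 + b ^ 2 = 1 := by
      have := Real.sin_sq_add_cos_sq θ; linarith
    have h2 : c ^ 2 + s ^ 2 = 1 := by
      have := Real.sin_sq_add_cos_sq α; linarith
    have h3 : cb ^ 2 + sb ^ 2 = 1 := by
      have := Real.sin_sq_add_cos_sq β; linarith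
    have hrel : b * s * cb = a * sb := by
      rw [Real.tan_eq_sin_div_cos, Real.tan_eq_sin_div_cos] at htan
      rw [div_mul_eq_mul_div, div_eq_div_iff (ne_of_gt (show 0 < Real.cos θ from haθ)) (ne_of_gt (show 0 < Real.cos β from hcβ))] at htan
      linear_combination htan
    have hCdef : C = 2 * b * a * c := by
      rw [← hCc, Real.sin_two_mul]; try ring
    have hid : (1 - 2*a*b*c)*(a^2 + b^2*s^2) - s^2*(1 - a*b*c)^2
        = a^2*c^2*(a - b*c)^2 := by
      linear_combination (s^2 - a^2*c^2 - 2*a*b*c*s^2) * h1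
        + (2*a^3*b*c - a^2*b^2*c^2 - a^2) * h2
    have key : s^2*(1 - a*b*c)^2 ≤ (1 - 2*a*b*c)*(a^2 + b^2*s^2) := by
      nlinarith [hid, sq_nonneg (a*c*(a - b*c))]
    have hsb : sb^2 * (a^2 + b^2*s^2) = b^2 * s^2 := by
      linear_combination (-(b*s*cb + a*sb)) * hrel + b^2*s^2 * h3
    have hD : 0 < a^2 + b^2*s^2 := by positivity
    have h4ab : (0:ℝ) ≤ 4*a^2*b^2*c^2 := by positivity
    have final : (a*c*sb)^2 * (2 - C)^2 * (a^2 + b^2*s^2)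
        ≤ C^2*(1 - C) * (a^2 + b^2*s^2) := by
      calc (a*c*sb)^2 * (2 - C)^2 * (a^2 + b^2*s^2)
          = 4*a^2*b^2*c^2 * (s^2*(1 - a*b*c)^2) := by
            rw [hCdef]; linear_combination (a*c*(2 - 2*b*a*c))^2 * hsb
        _ ≤ 4*a^2*b^2*c^2 * ((1 - 2*a*b*c)*(a^2 + b^2*s^2)) :=
            mul_le_mul_of_nonneg_left key h4ab
        _ = C^2*(1 - C) * (a^2 + b^2*s^2) := by rw [hCdef]; ring
    have hmain : (a*c*sb)^2 * (2 - C)^2 ≤ C^2*(1 - C) :=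
      le_of_mul_le_mul_right final hD
    rw [hpeq, le_div_iff₀ (by positivity : (0:ℝ) < (2 - C)^2)]
    linarith [hmain]
end

section
/- For every C ∈ (0,1), the inequality C²·(1−C)/(2−C)² < (√(1−C²)/2)·(1 − √(1−C²)) holds. (For every value of the concurrence, the maximal degree of success of the FTI-based Hardy-type argument strictly exceeds the maximal success probability of Hardy's original argument.) -/
/-- For every concurrence `C ∈ (0,1)`, the maximal degree of success of the FTI-based
argument, `(√(1−C²)/2)·(1 − √(1−C²))`, strictly exceeds the maximal success
probability of Hardy's original argument, `C²·(1−C)/(2−C)²`. -/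
theorem stmt_19 (C : ℝ) (hC : C ∈ Set.Ioo 0 1) :
    C ^ 2 * (1 - C) / (2 - C) ^ 2 <
      Real.sqrt (1 - C ^ 2) / 2 * (1 - Real.sqrt (1 - C ^ 2)) := by
  obtain ⟨h0, h1⟩ := hC
  set s := Real.sqrt (1 - C ^ 2) with hs
  have hpos : (0:ℝ) < 1 - C ^ 2 := by nlinarith
  have hs2 : s ^ 2 = 1 - C ^ 2 := Real.sq_sqrt hpos.le
  have hs0 : 0 < s := Real.sqrt_pos.mpr hpos
  have hs1 : s < 1 := by nlinarith [hs2]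
  have hden : (0:ℝ) < (2 - C) ^ 2 := by nlinarith
  have key : 2 * (1 - C) < s * (C ^ 2 - 2 * C + 2) := by
    have hb : (0:ℝ) ≤ s * (C ^ 2 - 2 * C + 2) :=
      mul_nonneg hs0.le (by nlinarith)
    have hsq : (2 * (1 - C)) ^ 2 < (s * (C ^ 2 - 2 * C + 2)) ^ 2 := by
      have h' : (s * (C ^ 2 - 2 * C + 2)) ^ 2 = (1 - C ^ 2) * (C ^ 2 - 2 * C + 2) ^ 2 := by
        rw [mul_pow, hs2]
      rw [h']
      nlinarith [mul_pos (mul_pos (mul_pos h0 h0) h0)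
        (mul_pos (show (0:ℝ) < 1 - C by linarith) (show (0:ℝ) < C^2-3*C+4 by nlinarith))]
    exact lt_of_pow_lt_pow_left₀ 2 hb hsq
  rw [div_lt_iff₀ hden]
  nlinarith [key, hs2, mul_pos hs0 hs0, sq_nonneg (1 - s), mul_pos hs0 hden,
    mul_lt_mul_of_pos_left key hs0]
end
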